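/- Assume α₁, α₂, α₃ > 0 and that the three numbers α₁+d₂, α₂+d₁, α₃+d₃ are all strictly positive or all strictly negative. Set σ₂ = (α₁+d₂)+(α₂+d₁)+(α₃+d₃) and Q* = (√((α₃+d₃)/σ₂), √((α₁+d₂)/σ₂), √((α₂+d₁)/σ₂)). Then the set of zeros of b in the closed positive octant ℝ³₊ = {x ∈ ℝ³ : x₁ ≥ 0, x₂ ≥ 0, x₃ ≥ 0} is exactly the five-point set {O, e₁, e₂, e₃, Q*}, where O = (0,0,0), e₁ = (1,0,0), e₂ = (0,1,0), e₃ = (0,0,1); in particular Q* is the unique equilibrium with all coordinates positive. -/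

import Mathlib

open scoped RealInnerProductSpace

/-- The cubic Kolmogorov vector field on `ℝ³` (modelled as `EuclideanSpace ℝ (Fin 3)`):
`b(x)₁ = x₁(α₁ − α₁x₁² − (α₁+α₂+d₁)x₂² + d₂x₃²)`,
`b(x)₂ = x₂(α₂ + d₁x₁² − α₂x₂² − (α₂+α₃+d₃)x₃²)`,
`b(x)₃ = x₃(α₃ − (α₃+α₁+d₂)x₁² + d₃x₂² − α₃x₃²)`. -/
noncomputable def bVF (α₁ α₂ α₃ d₁ d₂ d₃ : ℝ) (x : EuclideanSpace ℝ (Fin 3)) :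
    EuclideanSpace ℝ (Fin 3) :=
  (WithLp.equiv 2 (Fin 3 → ℝ)).symm
    ![x 0 * (α₁ - α₁ * (x 0)^2 - (α₁ + α₂ + d₁) * (x 1)^2 + d₂ * (x 2)^2),
      x 1 * (α₂ + d₁ * (x 0)^2 - α₂ * (x 1)^2 - (α₂ + α₃ + d₃) * (x 2)^2),
      x 2 * (α₃ - (α₃ + α₁ + d₂) * (x 0)^2 + d₃ * (x 1)^2 - α₃ * (x 2)^2)]

lemma pt_ext (x : EuclideanSpace ℝ (Fin 3)) (a b c : ℝ) :
    x = (WithLp.equiv 2 (Fin 3 → ℝ)).symm ![a, b, c] ↔ x 0 = a ∧ x 1 = b ∧ x 2 = c := by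
  constructor
  · rintro rfl; exact ⟨rfl, rfl, rfl⟩
  · rintro ⟨h0, h1, h2⟩
    ext i
    fin_cases i <;> assumption

lemma bVF_zero_iff (α₁ α₂ α₃ d₁ d₂ d₃ : ℝ) (x : EuclideanSpace ℝ (Fin 3)) :
    bVF α₁ α₂ α₃ d₁ d₂ d₃ x = 0 ↔
      x 0 * (α₁ - α₁ * (x 0)^2 - (α₁ + α₂ + d₁) * (x 1)^2 + d₂ * (x 2)^2) = 0 ∧
      x 1 * (α₂ + d₁ * (x 0)^2 - α₂ * (x 1)^2 - (α₂ + α₃ + d₃) * (x 2)^2) = 0 ∧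
      x 2 * (α₃ - (α₃ + α₁ + d₂) * (x 0)^2 + d₃ * (x 1)^2 - α₃ * (x 2)^2) = 0 := by
  constructor
  · intro h
    refine ⟨congrFun (congrArg WithLp.ofLp h) 0, congrFun (congrArg WithLp.ofLp h) 1, congrFun (congrArg WithLp.ofLp h) 2⟩
  · rintro ⟨h0, h1, h2⟩
    ext i
    fin_cases i <;> assumption

set_option maxHeartbeats 1600000 in
/-- If `αᵢ > 0` and `α₁+d₂, α₂+d₁, α₃+d₃` all have the same (strict) sign, the equilibria
of `b` in the closed positive octant are exactly `O, e₁, e₂, e₃` and the interior point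
`Q* = (√((α₃+d₃)/σ₂), √((α₁+d₂)/σ₂), √((α₂+d₁)/σ₂))` with `σ₂ = (α₁+d₂)+(α₂+d₁)+(α₃+d₃)`. -/
theorem equilibria_octant_same_sign (α₁ α₂ α₃ d₁ d₂ d₃ : ℝ)
    (hα₁ : 0 < α₁) (hα₂ : 0 < α₂) (hα₃ : 0 < α₃)
    (hsign : (0 < α₁ + d₂ ∧ 0 < α₂ + d₁ ∧ 0 < α₃ + d₃) ∨
             (α₁ + d₂ < 0 ∧ α₂ + d₁ < 0 ∧ α₃ + d₃ < 0)) :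
    {x : EuclideanSpace ℝ (Fin 3) | (∀ i, 0 ≤ x i) ∧ bVF α₁ α₂ α₃ d₁ d₂ d₃ x = 0}
      = {(WithLp.equiv 2 (Fin 3 → ℝ)).symm ![0, 0, 0], (WithLp.equiv 2 (Fin 3 → ℝ)).symm ![1, 0, 0],
         (WithLp.equiv 2 (Fin 3 → ℝ)).symm ![0, 1, 0], (WithLp.equiv 2 (Fin 3 → ℝ)).symm ![0, 0, 1],
         (WithLp.equiv 2 (Fin 3 → ℝ)).symm
           ![Real.sqrt ((α₃ + d₃) / ((α₁ + d₂) + (α₂ + d₁) + (α₃ + d₃))),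
             Real.sqrt ((α₁ + d₂) / ((α₁ + d₂) + (α₂ + d₁) + (α₃ + d₃))),
             Real.sqrt ((α₂ + d₁) / ((α₁ + d₂) + (α₂ + d₁) + (α₃ + d₃)))]} := by
  set σ : ℝ := (α₁ + d₂) + (α₂ + d₁) + (α₃ + d₃) with hσdef
  have hA : α₁ + d₂ ≠ 0 := by rcases hsign with ⟨h1,h2,h3⟩|⟨h1,h2,h3⟩ <;> [exact ne_of_gt h1; exact ne_of_lt h1]
  have hB : α₂ + d₁ ≠ 0 := by rcases hsign with ⟨h1,h2,h3⟩|⟨h1,h2,h3⟩ <;> [exact ne_of_gt h2; exact ne_of_lt h2]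
  have hC : α₃ + d₃ ≠ 0 := by rcases hsign with ⟨h1,h2,h3⟩|⟨h1,h2,h3⟩ <;> [exact ne_of_gt h3; exact ne_of_lt h3]
  have hσ : σ ≠ 0 := by
    rcases hsign with ⟨h1,h2,h3⟩|⟨h1,h2,h3⟩
    · exact ne_of_gt (by rw [hσdef]; linarith)
    · exact ne_of_lt (by rw [hσdef]; linarith)
  have hABC : (α₃ + d₃) * α₁ + (α₁ + d₂) * α₂ + (α₂ + d₁) * α₃ ≠ 0 := by
    rcases hsign with ⟨h1,h2,h3⟩|⟨h1,h2,h3⟩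
    · exact ne_of_gt (by nlinarith)
    · exact ne_of_lt (by nlinarith)
  have hAσ : 0 ≤ (α₁ + d₂) / σ := by
    rw [div_nonneg_iff]
    rcases hsign with ⟨h1,h2,h3⟩|⟨h1,h2,h3⟩
    · exact Or.inl ⟨h1.le, by rw [hσdef]; linarith⟩
    · exact Or.inr ⟨h1.le, by rw [hσdef]; linarith⟩
  have hBσ : 0 ≤ (α₂ + d₁) / σ := by
    rw [div_nonneg_iff]
    rcases hsign with ⟨h1,h2,h3⟩|⟨h1,h2,h3⟩
    · exact Or.inl ⟨h2.le, by rw [hσdef]; linarith⟩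
    · exact Or.inr ⟨h2.le, by rw [hσdef]; linarith⟩
  have hCσ : 0 ≤ (α₃ + d₃) / σ := by
    rw [div_nonneg_iff]
    rcases hsign with ⟨h1,h2,h3⟩|⟨h1,h2,h3⟩
    · exact Or.inl ⟨h3.le, by rw [hσdef]; linarith⟩
    · exact Or.inr ⟨h3.le, by rw [hσdef]; linarith⟩
  ext x
  simp only [Set.mem_setOf_eq, Set.mem_insert_iff, Set.mem_singleton_iff, pt_ext,
    bVF_zero_iff]
  constructor
  · rintro ⟨hx, hb0, hb1, hb2⟩
    rcases (hx 0).lt_or_eq with p0 | h0 <;> rcases (hx 1).lt_or_eq with p1 | h1 <;>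
      rcases (hx 2).lt_or_eq with p2 | h2
    · -- interior: Q*
      have hF1 := (mul_eq_zero.1 hb0).resolve_left (ne_of_gt p0)
      have hF2 := (mul_eq_zero.1 hb1).resolve_left (ne_of_gt p1)
      have hF3 := (mul_eq_zero.1 hb2).resolve_left (ne_of_gt p2)
      have hs : (x 0)^2 + (x 1)^2 + (x 2)^2 = 1 := by
        have key : ((α₃ + d₃) * α₁ + (α₁ + d₂) * α₂ + (α₂ + d₁) * α₃) *
            (1 - ((x 0)^2 + (x 1)^2 + (x 2)^2)) = 0 := by
          linear_combination (α₃ + d₃) * hF1 + (α₁ + d₂) * hF2 + (α₂ + d₁) * hF3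
        have := (mul_eq_zero.1 key).resolve_left hABC
        linarith
      have huw : (α₂ + d₁) * (x 0)^2 = (α₃ + d₃) * (x 2)^2 := by
        linear_combination hF2 + α₂ * hs
      have hvw : (α₂ + d₁) * (x 1)^2 = (α₁ + d₂) * (x 2)^2 := by
        linear_combination -hF1 - α₁ * hs
      have hw2 : (x 2)^2 = (α₂ + d₁) / σ := by
        have key : σ * (x 2)^2 = α₂ + d₁ := by
          rw [hσdef]; linear_combination (α₂ + d₁) * hs - huw - hvw
        field_simp
        linarith [key]
      have hu2 : (x 0)^2 = (α₃ + d₃) / σ := by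
        apply mul_left_cancel₀ hB
        rw [huw, hw2]; ring
      have hv2 : (x 1)^2 = (α₁ + d₂) / σ := by
        apply mul_left_cancel₀ hB
        rw [hvw, hw2]; ring
      refine Or.inr (Or.inr (Or.inr (Or.inr ⟨?_, ?_, ?_⟩)))
      · rw [← hu2, Real.sqrt_sq p0.le]
      · rw [← hv2, Real.sqrt_sq p1.le]
      · rw [← hw2, Real.sqrt_sq p2.le]
    · -- x2 = 0, x0,x1 > 0 : impossible
      exfalso
      have hF1 := (mul_eq_zero.1 hb0).resolve_left (ne_of_gt p0)
      have hF2 := (mul_eq_zero.1 hb1).resolve_left (ne_of_gt p1)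
      rw [← h2] at hF1 hF2
      have key : (α₂ + d₁) * (α₁ * (x 0)^2 + α₂ * (x 1)^2) = 0 := by
        linear_combination -α₂ * hF1 + α₁ * hF2
      have := (mul_eq_zero.1 key).resolve_left hB
      nlinarith [pow_pos p0 2, pow_pos p1 2]
    · -- x1 = 0, x0,x2 > 0 : impossible
      exfalso
      have hF1 := (mul_eq_zero.1 hb0).resolve_left (ne_of_gt p0)
      have hF3 := (mul_eq_zero.1 hb2).resolve_left (ne_of_gt p2)
      rw [← h1] at hF1 hF3
      have key : (α₁ + d₂) * (α₁ * (x 0)^2 + α₃ * (x 2)^2) = 0 := by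
        linear_combination α₃ * hF1 - α₁ * hF3
      have := (mul_eq_zero.1 key).resolve_left hA
      nlinarith [pow_pos p0 2, pow_pos p2 2]
    · -- x1 = x2 = 0, x0 > 0 : e1
      have hF1 := (mul_eq_zero.1 hb0).resolve_left (ne_of_gt p0)
      rw [← h1, ← h2] at hF1
      have hsq : α₁ * ((x 0 - 1) * (x 0 + 1)) = 0 := by linear_combination -hF1
      have := (mul_eq_zero.1 hsq).resolve_left (ne_of_gt hα₁)
      rcases mul_eq_zero.1 this with h | h
      · exact Or.inr (Or.inl ⟨by linarith, h1.symm, h2.symm⟩)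
      · exact absurd h (by nlinarith)
    · -- x0 = 0, x1,x2 > 0 : impossible
      exfalso
      have hF2 := (mul_eq_zero.1 hb1).resolve_left (ne_of_gt p1)
      have hF3 := (mul_eq_zero.1 hb2).resolve_left (ne_of_gt p2)
      rw [← h0] at hF2 hF3
      have key : (α₃ + d₃) * (α₂ * (x 1)^2 + α₃ * (x 2)^2) = 0 := by
        linear_combination -α₃ * hF2 + α₂ * hF3
      have := (mul_eq_zero.1 key).resolve_left hC
      nlinarith [pow_pos p1 2, pow_pos p2 2]
    · -- x0 = x2 = 0, x1 > 0 : e2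
      have hF2 := (mul_eq_zero.1 hb1).resolve_left (ne_of_gt p1)
      rw [← h0, ← h2] at hF2
      have hsq : α₂ * ((x 1 - 1) * (x 1 + 1)) = 0 := by linear_combination -hF2
      have := (mul_eq_zero.1 hsq).resolve_left (ne_of_gt hα₂)
      rcases mul_eq_zero.1 this with h | h
      · exact Or.inr (Or.inr (Or.inl ⟨h0.symm, by linarith, h2.symm⟩))
      · exact absurd h (by nlinarith)
    · -- x0 = x1 = 0, x2 > 0 : e3
      have hF3 := (mul_eq_zero.1 hb2).resolve_left (ne_of_gt p2)
      rw [← h0, ← h1] at hF3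
      have hsq : α₃ * ((x 2 - 1) * (x 2 + 1)) = 0 := by linear_combination -hF3
      have := (mul_eq_zero.1 hsq).resolve_left (ne_of_gt hα₃)
      rcases mul_eq_zero.1 this with h | h
      · exact Or.inr (Or.inr (Or.inr (Or.inl ⟨h0.symm, h1.symm, by linarith⟩)))
      · exact absurd h (by nlinarith)
    · -- origin
      exact Or.inl ⟨h0.symm, h1.symm, h2.symm⟩
  · rintro (⟨h0, h1, h2⟩ | ⟨h0, h1, h2⟩ | ⟨h0, h1, h2⟩ | ⟨h0, h1, h2⟩ | ⟨h0, h1, h2⟩)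
    · refine ⟨fun i => ?_, ?_, ?_, ?_⟩ <;>
        [skip; rw [h0]; rw [h1]; rw [h2]] <;> [skip; ring; ring; ring]
      fin_cases i <;> simp [h0, h1, h2]
    · refine ⟨fun i => ?_, ?_, ?_, ?_⟩ <;>
        [skip; rw [h0, h1, h2]; rw [h1]; rw [h2]] <;> [skip; ring; ring; ring]
      fin_cases i <;> simp [h0, h1, h2]
    · refine ⟨fun i => ?_, ?_, ?_, ?_⟩ <;>
        [skip; rw [h0]; rw [h0, h1, h2]; rw [h2]] <;> [skip; ring; ring; ring]
      fin_cases i <;> simp [h0, h1, h2]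
    · refine ⟨fun i => ?_, ?_, ?_, ?_⟩ <;>
        [skip; rw [h0]; rw [h1]; rw [h0, h1, h2]] <;> [skip; ring; ring; ring]
      fin_cases i <;> simp [h0, h1, h2]
    · -- Q*
      have e0 : (x 0)^2 = (α₃ + d₃) / σ := by rw [h0, Real.sq_sqrt hCσ]
      have e1 : (x 1)^2 = (α₁ + d₂) / σ := by rw [h1, Real.sq_sqrt hAσ]
      have e2 : (x 2)^2 = (α₂ + d₁) / σ := by rw [h2, Real.sq_sqrt hBσ]
      refine ⟨fun i => ?_, ?_, ?_, ?_⟩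
      · fin_cases i <;> simp [h0, h1, h2, Real.sqrt_nonneg]
      · rw [e0, e1, e2]
        have : (α₁ - α₁ * ((α₃ + d₃) / σ) - (α₁ + α₂ + d₁) * ((α₁ + d₂) / σ)
            + d₂ * ((α₂ + d₁) / σ)) = 0 := by
          rw [hσdef] at hσ ⊢; field_simp; ring
        rw [this, mul_zero]
      · rw [e0, e1, e2]
        have : (α₂ + d₁ * ((α₃ + d₃) / σ) - α₂ * ((α₁ + d₂) / σ)
            - (α₂ + α₃ + d₃) * ((α₂ + d₁) / σ)) = 0 := by
          rw [hσdef] at hσ ⊢; field_simp; ring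
        rw [this, mul_zero]
      · rw [e0, e1, e2]
        have : (α₃ - (α₃ + α₁ + d₂) * ((α₃ + d₃) / σ) + d₃ * ((α₁ + d₂) / σ)
            - α₃ * ((α₂ + d₁) / σ)) = 0 := by
          rw [hσdef] at hσ ⊢; field_simp; ring
        rw [this, mul_zero]
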